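/- Let y ∈ L¹(0,1), x, x₁, x₂ ∈ Ω(y) with x = (x₁ + x₂)/2. Suppose t₁ < t₂ in (0,1) are such that λ(x) is constant on [t₁, t₂), and ∫₀^{t₁} λ(s; x) ds = ∫₀^{t₁} λ(s; y) ds and ∫₀^{t₂} λ(s; x) ds = ∫₀^{t₂} λ(s; y) ds. Then ∫₀^{t_i} λ(s; x₁) ds = ∫₀^{t_i} λ(s; x₂) ds = ∫₀^{t_i} λ(s; y) ds for i = 1, 2. -/

import Mathlib

open MeasureTheory Set

/-- The decreasing rearrangement (spectral scale) of `f` on `(0,1)`. -/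
noncomputable def rr (f : ℝ → ℝ) (t : ℝ) : ℝ :=
  sInf {s : ℝ | volume {u ∈ Ioo (0:ℝ) 1 | s < f u} ≤ ENNReal.ofReal t}

open Filter Topology
open scoped ENNReal

namespace RRAux

noncomputable def D (f : ℝ → ℝ) (s : ℝ) : ℝ≥0∞ := volume {u ∈ Ioo (0:ℝ) 1 | s < f u}

lemma rr_eq (f : ℝ → ℝ) (t : ℝ) : rr f t = sInf {s : ℝ | D f s ≤ ENNReal.ofReal t} := rfl

lemma sep_eq (f : ℝ → ℝ) (s : ℝ) :
    {u ∈ Ioo (0:ℝ) 1 | s < f u} = {u | s < f u} ∩ Ioo (0:ℝ) 1 := by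
  ext u; simp [and_comm]

lemma D_eq (f : ℝ → ℝ) (s : ℝ) :
    D f s = (volume.restrict (Ioo (0:ℝ) 1)) {u | s < f u} := by
  rw [D, sep_eq, ← Measure.restrict_apply' measurableSet_Ioo]

lemma D_anti (f : ℝ → ℝ) : Antitone (D f) := fun _ _ hab =>
  measure_mono (fun _ hu => ⟨hu.1, lt_of_le_of_lt hab hu.2⟩)

lemma D_le_one (f : ℝ → ℝ) (s : ℝ) : D f s ≤ 1 := by
  have : D f s ≤ volume (Ioo (0:ℝ) 1) := measure_mono (sep_subset _ _)
  simpa [Real.volume_Ioo] using this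

lemma D_ne_top (f : ℝ → ℝ) (s : ℝ) : D f s ≠ ∞ :=
  ne_top_of_le_ne_top ENNReal.one_ne_top (D_le_one f s)

variable {f : ℝ → ℝ}

lemma exists_D_le (hf : AEMeasurable f (volume.restrict (Ioo (0:ℝ) 1)))
    {u : ℝ} (hu : 0 < u) : ∃ s, D f s ≤ ENNReal.ofReal u := by
  set μ := volume.restrict (Ioo (0:ℝ) 1)
  set A : ℕ → Set ℝ := fun n => {a | (n:ℝ) < f a} with hA
  have hmono : Antitone A := fun n m hnm a ha =>
    lt_of_le_of_lt (by exact_mod_cast hnm : (n:ℝ) ≤ m) ha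
  have hnull : ∀ n, NullMeasurableSet (A n) μ := fun n =>
    nullMeasurableSet_lt aemeasurable_const hf
  have hInter : ⋂ n, A n = ∅ := by
    ext a
    simp only [mem_iInter, mem_empty_iff_false, iff_false, not_forall, hA]
    obtain ⟨n, hn⟩ := exists_nat_gt (f a)
    exact ⟨n, by simpa using hn.le⟩
  have hfin : ∃ n, μ (A n) ≠ ∞ := ⟨0, by rw [← D_eq]; exact D_ne_top f _⟩
  have htend : Tendsto (μ ∘ A) atTop (𝓝 (μ (⋂ n, A n))) :=
    tendsto_measure_iInter_atTop hnull hmono hfin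
  rw [hInter, measure_empty] at htend
  have hpos : (0:ℝ≥0∞) < ENNReal.ofReal u := by simpa using hu
  obtain ⟨n, hn⟩ := (htend.eventually_lt_const hpos).exists
  exact ⟨n, by rw [D_eq]; exact hn.le⟩

lemma bddBelow_D {u : ℝ} (hu : u < 1) : BddBelow {s : ℝ | D f s ≤ ENNReal.ofReal u} := by
  set μ := volume.restrict (Ioo (0:ℝ) 1)
  set B : ℕ → Set ℝ := fun n => {a | -(n:ℝ) < f a} with hB
  have hmono : Monotone B := fun n m hnm a ha =>
    lt_of_le_of_lt (neg_le_neg (by exact_mod_cast hnm : (n:ℝ) ≤ m)) ha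
  have hUnion : ⋃ n, B n = univ := by
    ext a
    simp only [mem_iUnion, mem_univ, iff_true, hB, mem_setOf_eq]
    obtain ⟨n, hn⟩ := exists_nat_gt (-(f a))
    exact ⟨n, by linarith⟩
  have htend : Tendsto (μ ∘ B) atTop (𝓝 (μ (⋃ n, B n))) :=
    tendsto_measure_iUnion_atTop hmono
  have huniv : μ (⋃ n, B n) = 1 := by
    rw [hUnion]
    simp [μ, Real.volume_Ioo]
  rw [huniv] at htend
  have hlt : ENNReal.ofReal u < 1 := by
    exact ENNReal.ofReal_lt_one.2 hu
  obtain ⟨n, hn⟩ := (htend.eventually_const_lt hlt).exists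
  refine ⟨-(n:ℝ), fun s hs => ?_⟩
  by_contra hcon
  push_neg at hcon
  have : μ (B n) ≤ D f s := by
    rw [D_eq]
    exact measure_mono (fun a ha => lt_trans hcon ha)
  exact absurd (le_trans this hs) (not_le.2 hn)

lemma rr_le_iff (hf : AEMeasurable f (volume.restrict (Ioo (0:ℝ) 1)))
    {u : ℝ} (hu0 : 0 < u) (hu1 : u < 1) (s : ℝ) :
    rr f u ≤ s ↔ D f s ≤ ENNReal.ofReal u := by
  set μ := volume.restrict (Ioo (0:ℝ) 1)
  constructor
  · intro h
    have key : ∀ ε : ℝ, 0 < ε → D f (s + ε) ≤ ENNReal.ofReal u := by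
      intro ε hε
      have hne : {s' : ℝ | D f s' ≤ ENNReal.ofReal u}.Nonempty := exists_D_le hf hu0
      have hlt : sInf {s' : ℝ | D f s' ≤ ENNReal.ofReal u} < s + ε := by
        rw [← rr_eq]; linarith
      obtain ⟨s', hs'mem, hs'lt⟩ := exists_lt_of_csInf_lt hne hlt
      exact le_trans (D_anti f hs'lt.le) hs'mem
    set C : ℕ → Set ℝ := fun n => {a | s + 1/(n+1) < f a} with hC
    have hmono : Monotone C := by
      intro n m hnm a ha
      have hc : (n:ℝ) ≤ m := Nat.cast_le.2 hnm
      have h1 : (1:ℝ)/(m+1) ≤ 1/(n+1) := by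
        apply one_div_le_one_div_of_le <;> [positivity; linarith]
      simp only [hC, mem_setOf_eq] at ha ⊢
      linarith
    have hUnion : ⋃ n, C n = {a | s < f a} := by
      ext a
      simp only [mem_iUnion, hC, mem_setOf_eq]
      constructor
      · rintro ⟨n, hn⟩
        have : (0:ℝ) < 1/(n+1) := by positivity
        linarith
      · intro ha
        obtain ⟨n, hn⟩ := exists_nat_one_div_lt (show (0:ℝ) < f a - s by linarith)
        exact ⟨n, by push_cast at hn ⊢; linarith⟩
    have htend : Tendsto (μ ∘ C) atTop (𝓝 (μ (⋃ n, C n))) :=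
      tendsto_measure_iUnion_atTop hmono
    rw [hUnion, ← D_eq] at htend
    refine le_of_tendsto htend (Eventually.of_forall fun n => ?_)
    rw [show (μ ∘ C) n = D f (s + 1/(n+1)) by rw [Function.comp_apply, D_eq]]
    exact key _ (by positivity)
  · intro h
    rw [rr_eq]
    exact csInf_le (bddBelow_D hu1) h

lemma rr_antitoneOn (hf : AEMeasurable f (volume.restrict (Ioo (0:ℝ) 1))) :
    AntitoneOn (rr f) (Ioo (0:ℝ) 1) := by
  intro a ha b hb hab
  refine (rr_le_iff hf hb.1 hb.2 _).2 ?_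
  exact le_trans ((rr_le_iff hf ha.1 ha.2 _).1 le_rfl) (ENNReal.ofReal_le_ofReal hab)

lemma superlevel (hf : AEMeasurable f (volume.restrict (Ioo (0:ℝ) 1))) (s : ℝ) :
    {u ∈ Ioo (0:ℝ) 1 | s < rr f u} = Ioo 0 ((D f s).toReal) := by
  ext u
  constructor
  · rintro ⟨⟨hu0, hu1⟩, hlt⟩
    have h1 : ¬ D f s ≤ ENNReal.ofReal u := fun hc =>
      absurd ((rr_le_iff hf hu0 hu1 s).2 hc) (not_le.2 hlt)
    have h2 : ENNReal.ofReal u < D f s := not_le.1 h1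
    exact ⟨hu0, (ENNReal.ofReal_lt_iff_lt_toReal hu0.le (D_ne_top f s)).1 h2⟩
  · rintro ⟨hu0, hult⟩
    have htop : (D f s).toReal ≤ 1 := by
      have := D_le_one f s
      simpa using ENNReal.toReal_mono ENNReal.one_ne_top this
    have hu1 : u < 1 := lt_of_lt_of_le hult htop
    have h2 : ENNReal.ofReal u < D f s :=
      (ENNReal.ofReal_lt_iff_lt_toReal hu0.le (D_ne_top f s)).2 hult
    refine ⟨⟨hu0, hu1⟩, not_le.1 fun hc => ?_⟩
    exact absurd ((rr_le_iff hf hu0 hu1 s).1 hc) (not_le.2 h2)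

lemma D_rr (hf : AEMeasurable f (volume.restrict (Ioo (0:ℝ) 1))) (s : ℝ) :
    D (rr f) s = D f s := by
  rw [show D (rr f) s = volume {u ∈ Ioo (0:ℝ) 1 | s < rr f u} from rfl,
    superlevel hf s, Real.volume_Ioo]
  simp [ENNReal.ofReal_toReal (D_ne_top f s)]

lemma rr_aemeas (hf : AEMeasurable f (volume.restrict (Ioo (0:ℝ) 1))) :
    AEMeasurable (rr f) (volume.restrict (Ioo (0:ℝ) 1)) :=
  aemeasurable_restrict_of_antitoneOn measurableSet_Ioo (rr_antitoneOn hf)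

lemma lint_eq (c : ℝ) {g : ℝ → ℝ} (hg : AEMeasurable g (volume.restrict (Ioo (0:ℝ) 1))) :
    (∫⁻ u in Ioo (0:ℝ) 1, ENNReal.ofReal (max (g u - c) 0)) =
      ∫⁻ t in Ioi (0:ℝ), D g (c + t) := by
  set μ := volume.restrict (Ioo (0:ℝ) 1)
  have hnn : 0 ≤ᵐ[μ] fun u => max (g u - c) 0 := Eventually.of_forall fun u => le_max_right _ _
  have hmble : AEMeasurable (fun u => max (g u - c) 0) μ :=
    (hg.sub_const c).max aemeasurable_const
  rw [lintegral_eq_lintegral_meas_lt μ hnn hmble]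
  refine setLIntegral_congr_fun measurableSet_Ioi (fun t ht => ?_)
  have hset : {a | t < max (g a - c) 0} = {a | c + t < g a} := by
    ext a
    simp only [mem_setOf_eq, lt_max_iff]
    constructor
    · rintro (h | h); · linarith
      · exact absurd h (not_lt.2 (le_of_lt ht))
    · intro h; left; linarith
  rw [hset, ← D_eq]

lemma lint_rr_eq_f (hf : AEMeasurable f (volume.restrict (Ioo (0:ℝ) 1))) (c : ℝ) :
    (∫⁻ u in Ioo (0:ℝ) 1, ENNReal.ofReal (max (rr f u - c) 0)) =
      ∫⁻ u in Ioo (0:ℝ) 1, ENNReal.ofReal (max (f u - c) 0) := by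
  rw [lint_eq c (rr_aemeas hf), lint_eq c hf]
  exact lintegral_congr fun t => by rw [D_rr hf]

lemma integrableOn_pos_f (hf : IntegrableOn f (Ioo (0:ℝ) 1)) (c : ℝ) :
    IntegrableOn (fun u => max (f u - c) 0) (Ioo (0:ℝ) 1) := by
  refine Integrable.mono' (g := fun u => |f u| + |c|)
    (hf.abs.add (integrableOn_const (by simp [Real.volume_Ioo])))
    ((hf.aemeasurable.sub_const c).max aemeasurable_const).aestronglyMeasurable
    (Eventually.of_forall fun u => ?_)
  show ‖max (f u - c) 0‖ ≤ |f u| + |c|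
  rw [Real.norm_eq_abs, abs_of_nonneg (le_max_right _ _)]
  rcases max_cases (f u - c) 0 with ⟨h1, _⟩ | ⟨h1, _⟩ <;> rw [h1]
  · have := abs_nonneg (f u); have := neg_abs_le c; have := le_abs_self (f u); linarith
  · positivity

lemma integrableOn_pos_rr (hf : IntegrableOn f (Ioo (0:ℝ) 1)) (c : ℝ) :
    IntegrableOn (fun u => max (rr f u - c) 0) (Ioo (0:ℝ) 1) := by
  have hnn1 : (0 : ℝ → ℝ) ≤ᵐ[volume.restrict (Ioo (0:ℝ) 1)] fun u => max (rr f u - c) 0 :=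
    Eventually.of_forall fun u => le_max_right _ _
  have hnn2 : (0 : ℝ → ℝ) ≤ᵐ[volume.restrict (Ioo (0:ℝ) 1)] fun u => max (f u - c) 0 :=
    Eventually.of_forall fun u => le_max_right _ _
  constructor
  · exact (((rr_aemeas hf.aemeasurable).sub_const c).max aemeasurable_const).aestronglyMeasurable
  · rw [hasFiniteIntegral_iff_ofReal hnn1]
    rw [lint_rr_eq_f hf.aemeasurable c]
    have h2 := (integrableOn_pos_f hf c).2
    rwa [hasFiniteIntegral_iff_ofReal hnn2] at h2

lemma int_pos_eq (hf : IntegrableOn f (Ioo (0:ℝ) 1)) (c : ℝ) :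
    (∫ u in Ioo (0:ℝ) 1, max (rr f u - c) 0) = ∫ u in Ioo (0:ℝ) 1, max (f u - c) 0 := by
  have hnn1 : (0 : ℝ → ℝ) ≤ᵐ[volume.restrict (Ioo (0:ℝ) 1)] fun u => max (rr f u - c) 0 :=
    Eventually.of_forall fun u => le_max_right _ _
  have hnn2 : (0 : ℝ → ℝ) ≤ᵐ[volume.restrict (Ioo (0:ℝ) 1)] fun u => max (f u - c) 0 :=
    Eventually.of_forall fun u => le_max_right _ _
  rw [integral_eq_lintegral_of_nonneg_ae hnn1
      (((rr_aemeas hf.aemeasurable).sub_const c).max aemeasurable_const).aestronglyMeasurable,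
    integral_eq_lintegral_of_nonneg_ae hnn2
      ((hf.aemeasurable.sub_const c).max aemeasurable_const).aestronglyMeasurable,
    lint_rr_eq_f hf.aemeasurable c]

lemma rr_aestrongly_sub (hf : IntegrableOn f (Ioo (0:ℝ) 1)) {t : ℝ} (ht : t ∈ Ioo (0:ℝ) 1) :
    AEStronglyMeasurable (rr f) (volume.restrict (Ioo (0:ℝ) t)) := by
  have h := (rr_aemeas hf.aemeasurable).aestronglyMeasurable
  exact h.mono_measure (Measure.restrict_mono (Ioo_subset_Ioo le_rfl ht.2.le) le_rfl)

lemma integrableOn_rr (hf : IntegrableOn f (Ioo (0:ℝ) 1)) {t : ℝ} (ht : t ∈ Ioo (0:ℝ) 1) :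
    IntegrableOn (rr f) (Ioo (0:ℝ) t) := by
  have hsub : Ioo (0:ℝ) t ⊆ Ioo (0:ℝ) 1 := Ioo_subset_Ioo le_rfl ht.2.le
  have hpos : IntegrableOn (fun u => max (rr f u) 0) (Ioo (0:ℝ) t) := by
    have := integrableOn_pos_rr hf 0
    simpa using this.mono_set hsub
  refine Integrable.mono' (g := fun u => |rr f t| + max (rr f u) 0)
    ((integrableOn_const (by simp [Real.volume_Ioo])).add hpos)
    (rr_aestrongly_sub hf ht) ?_
  rw [ae_restrict_iff' measurableSet_Ioo]
  refine Eventually.of_forall fun u hu => ?_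
  have hge : rr f t ≤ rr f u :=
    rr_antitoneOn hf.aemeasurable ⟨hu.1, hu.2.trans ht.2⟩ ht hu.2.le
  show ‖rr f u‖ ≤ |rr f t| + max (rr f u) 0
  rw [Real.norm_eq_abs]
  rcases abs_cases (rr f u) with ⟨h1, _⟩ | ⟨h1, h2⟩ <;> rw [h1]
  · have := abs_nonneg (rr f t); have := le_max_left (rr f u) 0; linarith
  · have := neg_abs_le (rr f t); have := le_max_right (rr f u) 0; linarith

lemma int_sub_const (hf : IntegrableOn f (Ioo (0:ℝ) 1)) {t : ℝ} (ht : t ∈ Ioo (0:ℝ) 1)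
    (c : ℝ) :
    (∫ u in Ioo (0:ℝ) t, (rr f u - c)) = (∫ u in Ioo (0:ℝ) t, rr f u) - c * t := by
  rw [integral_sub (integrableOn_rr hf ht)
    (integrableOn_const (by simp [Real.volume_Ioo]))]
  rw [setIntegral_const, measureReal_def, Real.volume_Ioo]
  rw [ENNReal.toReal_ofReal (by linarith [ht.1])]
  rw [smul_eq_mul]; ring

lemma key_eq (hf : IntegrableOn f (Ioo (0:ℝ) 1)) {t : ℝ} (ht : t ∈ Ioo (0:ℝ) 1) :
    (∫ u in Ioo (0:ℝ) t, rr f u) =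
      rr f t * t + ∫ u in Ioo (0:ℝ) 1, max (f u - rr f t) 0 := by
  set c := rr f t with hc
  have step2 : (∫ u in Ioo (0:ℝ) t, (rr f u - c)) =
      ∫ u in Ioo (0:ℝ) t, max (rr f u - c) 0 := by
    refine setIntegral_congr_fun measurableSet_Ioo fun u hu => ?_
    have hge : c ≤ rr f u :=
      rr_antitoneOn hf.aemeasurable ⟨hu.1, hu.2.trans ht.2⟩ ht hu.2.le
    rw [max_eq_left (by linarith)]
  have hzero : (∫ u in Ico t 1, max (rr f u - c) 0) = 0 := by
    rw [setIntegral_congr_fun measurableSet_Ico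
      (g := fun _ => (0:ℝ)) fun u hu => ?_]
    · exact integral_zero _ _
    · have hle : rr f u ≤ c := by
        rcases eq_or_lt_of_le hu.1 with h | h
        · rw [← h]
        · exact rr_antitoneOn hf.aemeasurable ht ⟨ht.1.trans h, hu.2⟩ hu.1
      rw [max_eq_right (by linarith)]
  have step3 : (∫ u in Ioo (0:ℝ) 1, max (rr f u - c) 0) =
      ∫ u in Ioo (0:ℝ) t, max (rr f u - c) 0 := by
    rw [← Ioo_union_Ico_eq_Ioo ht.1 ht.2.le]
    rw [setIntegral_union (Set.disjoint_left.2 fun a ha hb => absurd hb.1 (not_le.2 ha.2)) measurableSet_Ico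
      ((integrableOn_pos_rr hf c).mono_set (Ioo_subset_Ioo le_rfl ht.2.le))
      ((integrableOn_pos_rr hf c).mono_set (Ico_subset_Ioo_left ht.1 |>.trans (fun a ha => ha)))]
    rw [hzero, add_zero]
  have := int_sub_const hf ht c
  rw [step2, ← step3, int_pos_eq hf c] at this
  linarith

lemma key_le (hf : IntegrableOn f (Ioo (0:ℝ) 1)) {t : ℝ} (ht : t ∈ Ioo (0:ℝ) 1) (c : ℝ) :
    (∫ u in Ioo (0:ℝ) t, rr f u) ≤ c * t + ∫ u in Ioo (0:ℝ) 1, max (f u - c) 0 := by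
  have hsub : Ioo (0:ℝ) t ⊆ Ioo (0:ℝ) 1 := Ioo_subset_Ioo le_rfl ht.2.le
  have h1 : (∫ u in Ioo (0:ℝ) t, (rr f u - c)) ≤
      ∫ u in Ioo (0:ℝ) t, max (rr f u - c) 0 := by
    refine integral_mono ((integrableOn_rr hf ht).sub
      (integrableOn_const (by simp [Real.volume_Ioo])))
      ((integrableOn_pos_rr hf c).mono_set hsub) fun u => le_max_left _ _
  have h2 : (∫ u in Ioo (0:ℝ) t, max (rr f u - c) 0) ≤
      ∫ u in Ioo (0:ℝ) 1, max (rr f u - c) 0 := by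
    refine setIntegral_mono_set (integrableOn_pos_rr hf c)
      (Eventually.of_forall fun u => le_max_right _ _) (HasSubset.Subset.eventuallyLE hsub)
  have := int_sub_const hf ht c
  rw [int_pos_eq hf c] at h2
  linarith

lemma subadd {x x₁ x₂ : ℝ → ℝ}
    (h1 : IntegrableOn x₁ (Ioo (0:ℝ) 1)) (h2 : IntegrableOn x₂ (Ioo (0:ℝ) 1))
    (hx : IntegrableOn x (Ioo (0:ℝ) 1))
    (havg : ∀ u, x u = (x₁ u + x₂ u) / 2) {t : ℝ} (ht : t ∈ Ioo (0:ℝ) 1) :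
    (∫ u in Ioo (0:ℝ) t, rr x u) ≤
      ((∫ u in Ioo (0:ℝ) t, rr x₁ u) + ∫ u in Ioo (0:ℝ) t, rr x₂ u) / 2 := by
  set c₁ := rr x₁ t
  set c₂ := rr x₂ t
  set c := (c₁ + c₂) / 2 with hcdef
  have hle := key_le hx ht c
  have heq1 := key_eq h1 ht
  have heq2 := key_eq h2 ht
  have hmono : (∫ u in Ioo (0:ℝ) 1, max (x u - c) 0) ≤
      ∫ u in Ioo (0:ℝ) 1, (max (x₁ u - c₁) 0 / 2 + max (x₂ u - c₂) 0 / 2) := by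
    refine integral_mono (integrableOn_pos_f hx c)
      (((integrableOn_pos_f h1 c₁).div_const 2).add ((integrableOn_pos_f h2 c₂).div_const 2))
      fun u => ?_
    have h1' := le_max_left (x₁ u - c₁) 0
    have h2' := le_max_left (x₂ u - c₂) 0
    have h3' := le_max_right (x₁ u - c₁) 0
    have h4' := le_max_right (x₂ u - c₂) 0
    have hx' := havg u
    refine max_le (by rw [hx', hcdef]; linarith) (by linarith)
  have hadd : (∫ u in Ioo (0:ℝ) 1, (max (x₁ u - c₁) 0 / 2 + max (x₂ u - c₂) 0 / 2)) =
      (∫ u in Ioo (0:ℝ) 1, max (x₁ u - c₁) 0) / 2 +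
        (∫ u in Ioo (0:ℝ) 1, max (x₂ u - c₂) 0) / 2 := by
    rw [integral_add ((integrableOn_pos_f h1 c₁).div_const 2)
      ((integrableOn_pos_f h2 c₂).div_const 2), integral_div, integral_div]
  rw [hadd] at hmono
  have hc : c * t = (c₁ * t) / 2 + (c₂ * t) / 2 := by rw [hcdef]; ring
  linarith

end RRAux

/-- Hardy–Littlewood–Pólya majorisation `g ≺ f` on `(0,1)`. -/
def Maj (g f : ℝ → ℝ) : Prop :=
  (∀ s ∈ Ico (0:ℝ) 1, (∫ t in Ioo (0:ℝ) s, rr g t) ≤ ∫ t in Ioo (0:ℝ) s, rr f t) ∧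
    (∫ t in Ioo (0:ℝ) 1, rr g t) = ∫ t in Ioo (0:ℝ) 1, rr f t

/-- The orbit `Ω(y)` of all integrable functions on `(0,1)` majorised by `y`. -/
def Omega (y : ℝ → ℝ) : Set (ℝ → ℝ) :=
  {x | IntegrableOn x (Ioo (0:ℝ) 1) ∧ Maj x y}

/-- `x` is an extreme point of the convex set `Ω` (functions identified a.e. on `(0,1)`). -/
def ExtremePt (Ω : Set (ℝ → ℝ)) (x : ℝ → ℝ) : Prop :=
  x ∈ Ω ∧ ∀ x₁ ∈ Ω, ∀ x₂ ∈ Ω,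
    (∀ᵐ u ∂(volume.restrict (Ioo (0:ℝ) 1)), x u = (x₁ u + x₂ u) / 2) →
    (∀ᵐ u ∂(volume.restrict (Ioo (0:ℝ) 1)), x₁ u = x₂ u)

theorem equal_partial_integrals_of_average (y x x₁ x₂ : ℝ → ℝ)
    (hy : IntegrableOn y (Ioo (0:ℝ) 1))
    (hx : x ∈ Omega y) (hx₁ : x₁ ∈ Omega y) (hx₂ : x₂ ∈ Omega y)
    (havg : ∀ u, x u = (x₁ u + x₂ u) / 2)
    (t₁ t₂ : ℝ) (h0 : 0 < t₁) (h12 : t₁ < t₂) (h21 : t₂ < 1)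
    (hconst : ∀ s ∈ Ico t₁ t₂, rr x s = rr x t₁)
    (he₁ : (∫ s in Ioo (0:ℝ) t₁, rr x s) = ∫ s in Ioo (0:ℝ) t₁, rr y s)
    (he₂ : (∫ s in Ioo (0:ℝ) t₂, rr x s) = ∫ s in Ioo (0:ℝ) t₂, rr y s) :
    ((∫ s in Ioo (0:ℝ) t₁, rr x₁ s) = ∫ s in Ioo (0:ℝ) t₁, rr y s) ∧
    ((∫ s in Ioo (0:ℝ) t₁, rr x₂ s) = ∫ s in Ioo (0:ℝ) t₁, rr y s) ∧
    ((∫ s in Ioo (0:ℝ) t₂, rr x₁ s) = ∫ s in Ioo (0:ℝ) t₂, rr y s) ∧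
    ((∫ s in Ioo (0:ℝ) t₂, rr x₂ s) = ∫ s in Ioo (0:ℝ) t₂, rr y s) := by
  obtain ⟨hxi, hxm⟩ := hx
  obtain ⟨h1i, h1m⟩ := hx₁
  obtain ⟨h2i, h2m⟩ := hx₂
  have ht₁ : t₁ ∈ Ioo (0:ℝ) 1 := ⟨h0, h12.trans h21⟩
  have ht₂ : t₂ ∈ Ioo (0:ℝ) 1 := ⟨h0.trans h12, h21⟩
  have s₁ := RRAux.subadd h1i h2i hxi havg ht₁
  have s₂ := RRAux.subadd h1i h2i hxi havg ht₂
  have a₁ := h1m.1 t₁ ⟨h0.le, ht₁.2⟩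
  have a₂ := h2m.1 t₁ ⟨h0.le, ht₁.2⟩
  have b₁ := h1m.1 t₂ ⟨ht₂.1.le, h21⟩
  have b₂ := h2m.1 t₂ ⟨ht₂.1.le, h21⟩
  exact ⟨by linarith, by linarith, by linarith, by linarith⟩
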